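/- arXiv:math/0009115 — 3 statements merged into one kernel-verified Lean document; each statement's English description precedes it below -/
import Mathlib

section
/- Let R be the commutative ring Z[y,z]/(y², 2z - y). Then the subgroup of R generated by the images of y², yz, z² (the degree-2 part, where y and z have degree 1) is a cyclic group of order 4 generated by the image of z². -/
open MvPolynomial

/-- The ring `ℤ[y,z]/(y², 2z - y)`. -/
noncomputable abbrev Stmt0.R : Type :=
  MvPolynomial (Fin 2) ℤ ⧸
    Ideal.span ({(X 0 : MvPolynomial (Fin 2) ℤ) ^ 2, 2 * X 1 - X 0} :
      Set (MvPolynomial (Fin 2) ℤ))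

noncomputable def Stmt0.f : Stmt0.R →+* ZMod 4 :=
  Ideal.Quotient.lift _ ((aeval ![2, 1] : MvPolynomial (Fin 2) ℤ →ₐ[ℤ] ZMod 4).toRingHom)
    (by
      intro a ha
      refine Submodule.span_induction ?_ ?_ ?_ ?_ ha
      · rintro x (rfl | rfl) <;> simp <;> decide
      · simp
      · intro x y _ _ hx hy; simp only [AlgHom.toRingHom_eq_coe, RingHom.coe_coe] at hx hy ⊢; simp [hx, hy]
      · intro r x _ hx
        simp only [AlgHom.toRingHom_eq_coe, RingHom.coe_coe] at hx ⊢; simp [smul_eq_mul, map_mul, hx])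

/-- In `R = ℤ[y,z]/(y², 2z - y)`, the subgroup generated by the images of
`y²`, `y·z`, `z²` (the degree-2 part) is cyclic of order 4, generated by the
image of `z²`. -/
theorem stmt_0
    (π : MvPolynomial (Fin 2) ℤ →+* Stmt0.R)
    (hπ : π = Ideal.Quotient.mk _) :
    AddSubgroup.closure
        ({π ((X 0) ^ 2), π ((X 0) * (X 1)), π ((X 1) ^ 2)} : Set Stmt0.R) =
      AddSubgroup.zmultiples (π ((X 1) ^ 2)) ∧
    addOrderOf (π ((X 1) ^ 2)) = 4 := by
  subst hπ
  set I : Ideal (MvPolynomial (Fin 2) ℤ) :=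
    Ideal.span ({(X 0 : MvPolynomial (Fin 2) ℤ) ^ 2, 2 * X 1 - X 0}) with hI
  have h1 : (Ideal.Quotient.mk I) ((X 0 : MvPolynomial (Fin 2) ℤ) ^ 2) = 0 := by
    rw [Ideal.Quotient.eq_zero_iff_mem]
    exact Ideal.subset_span (by left; rfl)
  have h2 : (Ideal.Quotient.mk I) ((X 0 : MvPolynomial (Fin 2) ℤ) * X 1) =
      (2 : ℤ) • (Ideal.Quotient.mk I) ((X 1 : MvPolynomial (Fin 2) ℤ) ^ 2) := by
    have : (X 0 : MvPolynomial (Fin 2) ℤ) * X 1 - 2 * (X 1) ^ 2 ∈ I := by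
      have : (X 0 : MvPolynomial (Fin 2) ℤ) * X 1 - 2 * (X 1) ^ 2 =
          (-(X 1)) * (2 * X 1 - X 0) := by ring
      rw [this]
      exact Ideal.mul_mem_left _ _ (Ideal.subset_span (by right; rfl))
    have := Ideal.Quotient.eq.mpr this
    simpa [zsmul_eq_mul, map_ofNat] using this
  have h4 : (4 : ℤ) • (Ideal.Quotient.mk I) ((X 1 : MvPolynomial (Fin 2) ℤ) ^ 2) = 0 := by
    have hm : (4 : MvPolynomial (Fin 2) ℤ) * (X 1) ^ 2 ∈ I := by
      have : (4 : MvPolynomial (Fin 2) ℤ) * (X 1) ^ 2 =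
          (2 * X 1 + X 0) * (2 * X 1 - X 0) + (X 0) ^ 2 := by ring
      rw [this]
      exact Ideal.add_mem _
        (Ideal.mul_mem_left _ _ (Ideal.subset_span (by right; rfl)))
        (Ideal.subset_span (by left; rfl))
    have := Ideal.Quotient.eq_zero_iff_mem.mpr hm
    simpa [zsmul_eq_mul, map_ofNat] using this
  set a := (Ideal.Quotient.mk I) ((X 1 : MvPolynomial (Fin 2) ℤ) ^ 2) with ha
  constructor
  · apply le_antisymm
    · rw [AddSubgroup.closure_le]
      rintro x (rfl | rfl | rfl)
      · rw [h1]; exact zero_mem _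
      · rw [h2]; exact AddSubgroup.zsmul_mem _ (AddSubgroup.mem_zmultiples a) 2
      · exact AddSubgroup.mem_zmultiples a
    · rintro x ⟨n, rfl⟩
      exact AddSubgroup.zsmul_mem _ (AddSubgroup.subset_closure (by simp)) n
  · have hdvd : addOrderOf a ∣ 4 := by
      apply addOrderOf_dvd_of_nsmul_eq_zero
      simpa using h4
    have hfa : Stmt0.f a = 1 := by
      simp only [Stmt0.f, ha]
      rw [Ideal.Quotient.lift_mk]
      simp
    have hmap : addOrderOf (Stmt0.f a) ∣ addOrderOf a :=
      addOrderOf_map_dvd (Stmt0.f.toAddMonoidHom) a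
    rw [hfa] at hmap
    have h1' : addOrderOf (1 : ZMod 4) = 4 := ZMod.addOrderOf_one 4
    rw [h1'] at hmap
    exact Nat.dvd_antisymm hdvd hmap
end

section
/- Let A be a commutative ring and m ∈ A. Define φ : ⊕_{s≥1} A → ⊕_{s≥0} A by φ(a₁, a₂, ...) = (m·a₁, m·a₂ - n·a₁, m·a₃ - n·a₂, ...). Then the cokernel of φ is isomorphic as an A-module to A[z]/(n·z - m) via (b₀, b₁, b₂, ...) ↦ Σ b_s·z^s. -/
open Polynomial

noncomputable def Pmap (A : Type*) [CommRing A] : (ℕ →₀ A) →ₗ[A] A[X] :=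
  Finsupp.linearCombination A (fun s => (X : A[X]) ^ s)

lemma Pmap_coeff (A : Type*) [CommRing A] (b : ℕ →₀ A) (t : ℕ) :
    (Pmap A b).coeff t = b t := by
  classical
  simp only [Pmap, Finsupp.linearCombination_apply, Finsupp.sum]
  rw [Polynomial.finset_sum_coeff]
  simp only [Polynomial.coeff_smul, Polynomial.coeff_X_pow, smul_eq_mul, mul_ite, mul_one, mul_zero]
  rw [Finset.sum_ite_eq b.support t]
  by_cases h : t ∈ b.support
  · simp [h]
  · simp [h, Finsupp.notMem_support_iff.mp h]

lemma Pmap_inj (A : Type*) [CommRing A] : Function.Injective (Pmap A) := by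
  intro b b' h
  ext t
  rw [← Pmap_coeff A b t, ← Pmap_coeff A b' t, h]

/-- Let `A` be a commutative ring, `m ∈ A`, `n ≥ 1`.  Define
`φ : ⊕_{s≥1} A → ⊕_{s≥0} A` by `φ(a₁, a₂, …) = (m·a₁, m·a₂ - n·a₁, …)`
(here both sides are indexed by `ℕ`, with the domain entry `a_{s+1}` stored at
index `s`).  Then the cokernel of `φ` is isomorphic as an `A`-module to
`A[z]/(n·z - m)` via `(b₀, b₁, …) ↦ Σ b_s·z^s`: i.e. the total map
`⊕_{s≥0} A → A[z]/(n·z - m)` is surjective with kernel equal to the range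
of `φ`. -/
theorem stmt_12 (A : Type*) [CommRing A] (m : A) (n : ℕ) (hn : 0 < n)
    (φ : (ℕ →₀ A) →ₗ[A] (ℕ →₀ A))
    (hφ : ∀ (f : ℕ →₀ A) (s : ℕ),
      φ f s = m * f s - n * (if h : s = 0 then 0 else f (s - 1)))
    (T : (ℕ →₀ A) →ₗ[A] (A[X] ⧸ Ideal.span ({(n : A[X]) * X - C m} : Set A[X])))
    (hT : T = Finsupp.linearCombination A (fun s => Ideal.Quotient.mk _ (X ^ s))) :
    Function.Surjective T ∧ LinearMap.ker T = LinearMap.range φ := by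
  classical
  have hTP : ∀ b, T b =
      Ideal.Quotient.mk (Ideal.span ({(n : A[X]) * X - C m} : Set A[X])) (Pmap A b) := by
    intro b
    rw [hT]
    have : (Ideal.Quotient.mkₐ A (Ideal.span ({(n : A[X]) * X - C m} : Set A[X]))).toLinearMap
        (Pmap A b) = Finsupp.linearCombination A
        (fun s => (Ideal.Quotient.mkₐ A (Ideal.span ({(n : A[X]) * X - C m} : Set A[X]))).toLinearMap
          ((X:A[X]) ^ s)) b :=
      Finsupp.apply_linearCombination A _ _ b
    simpa [Pmap] using this.symm
  -- key identity : Pmap (φ f) = (C m - n X) * Pmap f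
  have hkey : ∀ f : ℕ →₀ A, Pmap A (φ f) = (C m - (n : A[X]) * X) * Pmap A f := by
    intro f
    ext t
    rw [Pmap_coeff, hφ]
    rw [sub_mul, Polynomial.coeff_sub, Polynomial.coeff_C_mul, Pmap_coeff]
    congr 1
    have h1 : ((n : A[X]) * X * Pmap A f) = C (n : A) * (X * Pmap A f) := by
      rw [Polynomial.C_eq_natCast]; ring
    rw [h1, Polynomial.coeff_C_mul]
    rcases t with _ | t
    · simp
    · simp only [Nat.succ_ne_zero, dif_neg, not_false_iff]
      rw [Polynomial.coeff_X_mul, Pmap_coeff]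
      simp
  constructor
  · intro y
    obtain ⟨p, rfl⟩ := Ideal.Quotient.mk_surjective
      (I := Ideal.span ({(n : A[X]) * X - C m} : Set A[X])) y
    refine ⟨p.toFinsupp.coeff, ?_⟩
    rw [hTP]
    congr 1
    ext t
    rw [Pmap_coeff]
    rfl
  · ext b
    simp only [LinearMap.mem_ker, LinearMap.mem_range]
    constructor
    · intro hb
      rw [hTP] at hb
      have hmem : Pmap A b ∈ Ideal.span ({(n : A[X]) * X - C m} : Set A[X]) :=
        (Ideal.Quotient.eq_zero_iff_mem).mp hb
      rw [Ideal.mem_span_singleton] at hmem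
      obtain ⟨q, hq⟩ := hmem
      refine ⟨(-q).toFinsupp.coeff, ?_⟩
      apply Pmap_inj A
      rw [hkey]
      have hPq : Pmap A (-q).toFinsupp.coeff = -q := by
        ext t; rw [Pmap_coeff]; rfl
      rw [hPq, hq]
      ring
    · rintro ⟨f, rfl⟩
      rw [hTP, hkey, Ideal.Quotient.eq_zero_iff_mem]
      have h2 : C m - (n : A[X]) * X = -((n : A[X]) * X - C m) := by ring
      rw [h2, neg_mul]
      exact neg_mem (Ideal.mul_mem_right _ _ (Ideal.subset_span rfl))
end

section
/- Let F ⊆ F' be a field extension of odd degree and Q a quaternion division algebra over F. Then Q ⊗_F F' is still a division algebra. In particular, a smooth conic over F without F-points has no points over any odd-degree extension of F. -/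
open Quaternion
open Polynomial

/-- The conic `x² - a y² - b z² = 0` is anisotropic over `F`. -/
def SpringerAniso (F : Type*) [CommRing F] (a b : F) : Prop :=
  ∀ x y z : F, x ^ 2 - a * y ^ 2 - b * z ^ 2 = 0 → x = 0 ∧ y = 0 ∧ z = 0

theorem springerAniso_congr {A B : Type*} [CommRing A] [CommRing B] (e : A ≃+* B) {a b : A}
    (h : SpringerAniso A a b) : SpringerAniso B (e a) (e b) := by
  intro x y z hxyz
  obtain ⟨x, rfl⟩ := e.surjective x
  obtain ⟨y, rfl⟩ := e.surjective y
  obtain ⟨z, rfl⟩ := e.surjective z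
  have h0 : e (x ^ 2 - a * y ^ 2 - b * z ^ 2) = e 0 := by
    rw [map_zero]; simpa [map_sub, map_mul, map_pow] using hxyz
  obtain ⟨rfl, rfl, rfl⟩ := h x y z (e.injective h0)
  simp

theorem springer_exists_odd_factor {F : Type*} [Field F] :
    ∀ n : ℕ, ∀ p : F[X], p ≠ 0 → p.natDegree = n → Odd n →
      ∃ q : F[X], Irreducible q ∧ Odd q.natDegree ∧ q ∣ p := by
  intro n
  induction n using Nat.strong_induction_on with
  | _ n IH =>
    intro p hp hdeg hodd
    have hn1 : 1 ≤ n := hodd.pos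
    have hpu : ¬IsUnit p := by
      intro hu
      have := Polynomial.natDegree_eq_zero_of_isUnit hu
      omega
    obtain ⟨q, hq, hqd⟩ := WfDvdMonoid.exists_irreducible_factor hpu hp
    obtain ⟨r, rfl⟩ := hqd
    have hq0 : q ≠ 0 := hq.ne_zero
    have hr0 : r ≠ 0 := by rintro rfl; simp at hp
    have hsum : q.natDegree + r.natDegree = n := by
      rw [← hdeg, Polynomial.natDegree_mul hq0 hr0]
    rcases Nat.even_or_odd q.natDegree with hqe | hqo
    · have hro : Odd r.natDegree := by
        rcases hqe with ⟨k, hk⟩; rcases hodd with ⟨l, hl⟩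
        exact ⟨l - k, by omega⟩
      have hqpos : 0 < q.natDegree := hq.natDegree_pos
      obtain ⟨s, hs1, hs2, hs3⟩ := IH r.natDegree (by omega) r hr0 rfl hro
      exact ⟨s, hs1, hs2, hs3.mul_left q⟩
    · exact ⟨q, hq, hqo, Dvd.intro r rfl⟩

theorem springer_coeff_sq {F : Type*} [Field F] (p : F[X]) (d : ℕ) (hp : p.natDegree ≤ d) :
    (p * p).coeff (2 * d) = p.coeff d ^ 2 := by
  rcases eq_or_lt_of_le hp with h | h
  · have := Polynomial.coeff_mul_degree_add_degree p p
    rw [← h, two_mul, this, Polynomial.leadingCoeff, sq]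
  · have h1 : (p * p).natDegree < 2 * d := by
      have := Polynomial.natDegree_mul_le (p := p) (q := p)
      omega
    rw [Polynomial.coeff_eq_zero_of_natDegree_lt h1,
      Polynomial.coeff_eq_zero_of_natDegree_lt h, zero_pow two_ne_zero]

set_option maxHeartbeats 1000000 in
theorem springer_adjoinRoot {F : Type*} [Field F] (a b : F) (hab : SpringerAniso F a b) :
    ∀ n : ℕ, ∀ m : F[X], Irreducible m → m.Monic → m.natDegree = n → Odd n →
      SpringerAniso (AdjoinRoot m) (AdjoinRoot.of m a) (AdjoinRoot.of m b) := by
  intro n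
  induction n using Nat.strong_induction_on with
  | _ n IH =>
  intro m hm hmo hdeg hodd X Y Z hXYZ
  classical
  by_contra hne
  have hn1 : 1 ≤ n := hodd.pos
  obtain ⟨f₀, rfl⟩ := AdjoinRoot.mk_surjective X
  obtain ⟨g₀, rfl⟩ := AdjoinRoot.mk_surjective Y
  obtain ⟨h₀, rfl⟩ := AdjoinRoot.mk_surjective Z
  have hmkmod : ∀ p : F[X], AdjoinRoot.mk m (p %ₘ m) = AdjoinRoot.mk m p := by
    intro p
    conv_rhs => rw [← Polynomial.modByMonic_add_div p m]
    simp [map_add, map_mul, AdjoinRoot.mk_self]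
  rw [← hmkmod f₀] at hXYZ hne
  rw [← hmkmod g₀] at hXYZ hne
  rw [← hmkmod h₀] at hXYZ hne
  set f₁ := f₀ %ₘ m with hf₁def
  set g₁ := g₀ %ₘ m with hg₁def
  set h₁ := h₀ %ₘ m with hh₁def
  have hm1 : m ≠ 1 := hm.not_isUnit ∘ (· ▸ isUnit_one)
  have hf₁deg : f₁.natDegree < n := hdeg ▸ Polynomial.natDegree_modByMonic_lt f₀ hmo hm1
  have hg₁deg : g₁.natDegree < n := hdeg ▸ Polynomial.natDegree_modByMonic_lt g₀ hmo hm1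
  have hh₁deg : h₁.natDegree < n := hdeg ▸ Polynomial.natDegree_modByMonic_lt h₀ hmo hm1
  have hnz : ¬(f₁ = 0 ∧ g₁ = 0 ∧ h₁ = 0) := by
    rintro ⟨e1, e2, e3⟩
    exact hne (by rw [e1, e2, e3]; simp)
  set G := EuclideanDomain.gcd f₁ (EuclideanDomain.gcd g₁ h₁) with hGdef
  have hG0 : G ≠ 0 := by
    intro h0
    rw [hGdef, EuclideanDomain.gcd_eq_zero_iff, EuclideanDomain.gcd_eq_zero_iff] at h0
    exact hnz ⟨h0.1, h0.2.1, h0.2.2⟩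
  obtain ⟨f, hf⟩ : G ∣ f₁ := EuclideanDomain.gcd_dvd_left _ _
  obtain ⟨g, hg⟩ : G ∣ g₁ :=
    (EuclideanDomain.gcd_dvd_right _ _).trans (EuclideanDomain.gcd_dvd_left _ _)
  obtain ⟨h, hh⟩ : G ∣ h₁ :=
    (EuclideanDomain.gcd_dvd_right _ _).trans (EuclideanDomain.gcd_dvd_right _ _)
  have hcop : ∀ c : F[X], c ∣ f → c ∣ g → c ∣ h → IsUnit c := by
    intro c hc1 hc2 hc3
    have hdd : G * c ∣ G := by
      rw [hGdef]
      have d1 : G * c ∣ f₁ := by rw [hf]; exact mul_dvd_mul_left G hc1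
      have d2 : G * c ∣ g₁ := by rw [hg]; exact mul_dvd_mul_left G hc2
      have d3 : G * c ∣ h₁ := by rw [hh]; exact mul_dvd_mul_left G hc3
      exact EuclideanDomain.dvd_gcd d1 (EuclideanDomain.dvd_gcd d2 d3)
    have : c ∣ 1 := (mul_dvd_mul_iff_left hG0).mp (by simpa using hdd)
    exact isUnit_of_dvd_one this
  have hfdeg : f.natDegree < n := by
    rcases eq_or_ne f₁ 0 with h0 | h0
    · have : f = 0 := by
        rcases mul_eq_zero.mp (hf ▸ h0) with h | h
        · exact absurd h hG0
        · exact h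
      rw [this]; simp; omega
    · exact lt_of_le_of_lt (Polynomial.natDegree_le_of_dvd ⟨G, hf.trans (mul_comm _ _)⟩ h0) hf₁deg
  have hgdeg : g.natDegree < n := by
    rcases eq_or_ne g₁ 0 with h0 | h0
    · have : g = 0 := by
        rcases mul_eq_zero.mp (hg ▸ h0) with h | h
        · exact absurd h hG0
        · exact h
      rw [this]; simp; omega
    · exact lt_of_le_of_lt (Polynomial.natDegree_le_of_dvd ⟨G, hg.trans (mul_comm _ _)⟩ h0) hg₁deg
  have hhdeg : h.natDegree < n := by
    rcases eq_or_ne h₁ 0 with h0 | h0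
    · have : h = 0 := by
        rcases mul_eq_zero.mp (hh ▸ h0) with h' | h'
        · exact absurd h' hG0
        · exact h'
      rw [this]; simp; omega
    · exact lt_of_le_of_lt (Polynomial.natDegree_le_of_dvd ⟨G, hh.trans (mul_comm _ _)⟩ h0) hh₁deg
  have hfgh : ¬(f = 0 ∧ g = 0 ∧ h = 0) := by
    rintro ⟨rfl, rfl, rfl⟩
    simp only [mul_zero] at hf hg hh
    exact hnz ⟨hf, hg, hh⟩
  set d := max (max f.natDegree g.natDegree) h.natDegree with hddef
  have hfd : f.natDegree ≤ d := le_trans (le_max_left _ _) (le_max_left _ _)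
  have hgd : g.natDegree ≤ d := le_trans (le_max_right _ _) (le_max_left _ _)
  have hhd : h.natDegree ≤ d := le_max_right _ _
  have hdn : d < n := by
    rw [hddef]
    exact max_lt (max_lt hfdeg hgdeg) hhdeg
  set S := f * f - Polynomial.C a * (g * g) - Polynomial.C b * (h * h) with hSdef
  -- m divides S
  have hmdvd : m ∣ S := by
    have hid : AdjoinRoot.mk m (f₁ * f₁ - Polynomial.C a * (g₁ * g₁)
        - Polynomial.C b * (h₁ * h₁)) = (AdjoinRoot.mk m f₁) ^ 2
        - AdjoinRoot.of m a * (AdjoinRoot.mk m g₁) ^ 2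
        - AdjoinRoot.of m b * (AdjoinRoot.mk m h₁) ^ 2 := by
      simp only [map_sub, map_mul, sq]; rfl
    have h0 : AdjoinRoot.mk m (f₁ * f₁ - Polynomial.C a * (g₁ * g₁)
        - Polynomial.C b * (h₁ * h₁)) = 0 := by rw [hid, hXYZ]
    have h1 : m ∣ G * G * S := by
      have := AdjoinRoot.mk_eq_zero.mp h0
      convert this using 1
      rw [hf, hg, hh, hSdef]; ring
    have hGdeg : G.natDegree < n := by
      have : ¬(f₁ = 0 ∧ g₁ = 0 ∧ h₁ = 0) := hnz
      rcases eq_or_ne f₁ 0 with h0' | h0'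
      · rcases eq_or_ne g₁ 0 with h0'' | h0''
        · have hh0 : h₁ ≠ 0 := fun e => hnz ⟨h0', h0'', e⟩
          exact lt_of_le_of_lt (Polynomial.natDegree_le_of_dvd ⟨h, hh⟩ hh0) hh₁deg
        · exact lt_of_le_of_lt (Polynomial.natDegree_le_of_dvd ⟨g, hg⟩ h0'') hg₁deg
      · exact lt_of_le_of_lt (Polynomial.natDegree_le_of_dvd ⟨f, hf⟩ h0') hf₁deg
    have hprime : Prime m := hm.prime
    rcases (hprime.dvd_mul.mp h1) with h2 | h2
    · exfalso
      have : m ∣ G := by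
        rcases hprime.dvd_mul.mp h2 with h3 | h3 <;> exact h3
      have := Polynomial.natDegree_le_of_dvd this hG0
      omega
    · exact h2
  have hcoeff : S.coeff (2 * d) = f.coeff d ^ 2 - a * g.coeff d ^ 2 - b * h.coeff d ^ 2 := by
    rw [hSdef]
    rw [Polynomial.coeff_sub, Polynomial.coeff_sub, Polynomial.coeff_C_mul,
      Polynomial.coeff_C_mul, springer_coeff_sq f d hfd, springer_coeff_sq g d hgd,
      springer_coeff_sq h d hhd]
  have hzd : ∀ p : F[X], p.coeff d = 0 → p.natDegree = d → p = 0 := by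
    intro p h1 h2
    by_contra hp
    have := Polynomial.leadingCoeff_ne_zero.mpr hp
    rw [Polynomial.leadingCoeff, h2] at this
    exact this h1
  have hkey : S.coeff (2 * d) ≠ 0 := by
    intro h0
    rw [hcoeff] at h0
    obtain ⟨e1, e2, e3⟩ := hab _ _ _ h0
    have hattain : f.natDegree = d ∨ g.natDegree = d ∨ h.natDegree = d := by
      rcases le_or_gt h.natDegree (max f.natDegree g.natDegree) with h1 | h1
      · have hd : d = max f.natDegree g.natDegree := by rw [hddef, max_eq_left h1]
        rcases le_or_gt g.natDegree f.natDegree with h2 | h2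
        · exact Or.inl (by rw [hd, max_eq_left h2])
        · exact Or.inr (Or.inl (by rw [hd, max_eq_right h2.le]))
      · exact Or.inr (Or.inr (by rw [hddef, max_eq_right h1.le]))
    have hd0 : d = 0 := by
      rcases hattain with h' | h' | h'
      · have := hzd f e1 h'; rw [this] at h'; simpa using h'.symm
      · have := hzd g e2 h'; rw [this] at h'; simpa using h'.symm
      · have := hzd h e3 h'; rw [this] at h'; simpa using h'.symm
    exact hfgh ⟨hzd f e1 (by omega), hzd g e2 (by omega), hzd h e3 (by omega)⟩
  have hS0 : S ≠ 0 := fun h0 => hkey (by rw [h0]; simp)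
  have hSdeg : S.natDegree = 2 * d := by
    refine le_antisymm ?_ (Polynomial.le_natDegree_of_ne_zero hkey)
    have b1 : (f * f).natDegree ≤ 2 * d :=
      le_trans Polynomial.natDegree_mul_le (by omega)
    have b2 : (Polynomial.C a * (g * g)).natDegree ≤ 2 * d := by
      refine le_trans Polynomial.natDegree_mul_le ?_
      have := Polynomial.natDegree_mul_le (p := g) (q := g)
      simp only [Polynomial.natDegree_C, zero_add]
      omega
    have b3 : (Polynomial.C b * (h * h)).natDegree ≤ 2 * d := by
      refine le_trans Polynomial.natDegree_mul_le ?_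
      have := Polynomial.natDegree_mul_le (p := h) (q := h)
      simp only [Polynomial.natDegree_C, zero_add]
      omega
    rw [hSdef]
    exact le_trans (Polynomial.natDegree_sub_le _ _)
      (max_le (le_trans (Polynomial.natDegree_sub_le _ _) (max_le b1 b2)) b3)
  obtain ⟨e, he⟩ := hmdvd
  have he0 : e ≠ 0 := by rintro rfl; rw [mul_zero] at he; exact hS0 he
  have hmndeg : n + e.natDegree = 2 * d := by
    rw [← hSdeg, he, Polynomial.natDegree_mul hm.ne_zero he0, hdeg]
  have heodd : Odd e.natDegree := by
    rcases hodd with ⟨k, hk⟩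
    exact ⟨d - k - 1, by omega⟩
  obtain ⟨q, hq, hqodd, hqdvd⟩ := springer_exists_odd_factor e.natDegree e he0 rfl heodd
  have hqdeg : q.natDegree < n := by
    have := Polynomial.natDegree_le_of_dvd hqdvd he0
    omega
  set q' := q * Polynomial.C q.leadingCoeff⁻¹ with hq'def
  have hlc0 : q.leadingCoeff⁻¹ ≠ 0 :=
    inv_ne_zero (Polynomial.leadingCoeff_ne_zero.mpr hq.ne_zero)
  have hu : IsUnit (Polynomial.C q.leadingCoeff⁻¹) :=
    Polynomial.isUnit_C.mpr (isUnit_iff_ne_zero.mpr hlc0)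
  have hassoc : Associated q q' := ⟨hu.unit, by rw [hq'def, IsUnit.unit_spec]⟩
  have hq'irr : Irreducible q' := hassoc.irreducible hq
  have hq'mo : q'.Monic := Polynomial.monic_mul_leadingCoeff_inv hq.ne_zero
  have hq'deg : q'.natDegree = q.natDegree := by
    rw [hq'def, Polynomial.natDegree_mul hq.ne_zero (Polynomial.C_ne_zero.mpr hlc0),
      Polynomial.natDegree_C, add_zero]
  have hq'S : q' ∣ S := (hassoc.symm.dvd).trans (hqdvd.trans ⟨m, by rw [he, mul_comm]⟩)
  have hani := IH q'.natDegree (by omega) q' hq'irr hq'mo rfl (hq'deg ▸ hqodd)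
  have happ := hani (AdjoinRoot.mk q' f) (AdjoinRoot.mk q' g) (AdjoinRoot.mk q' h) ?_
  · obtain ⟨e1, e2, e3⟩ := happ
    exact hq'irr.not_isUnit (hcop q' (AdjoinRoot.mk_eq_zero.mp e1)
      (AdjoinRoot.mk_eq_zero.mp e2) (AdjoinRoot.mk_eq_zero.mp e3))
  · have h0 : AdjoinRoot.mk q' S = 0 := AdjoinRoot.mk_eq_zero.mpr hq'S
    rw [hSdef] at h0
    have hid : AdjoinRoot.mk q' (f * f - Polynomial.C a * (g * g)
        - Polynomial.C b * (h * h)) = (AdjoinRoot.mk q' f) ^ 2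
        - AdjoinRoot.of q' a * (AdjoinRoot.mk q' g) ^ 2
        - AdjoinRoot.of q' b * (AdjoinRoot.mk q' h) ^ 2 := by
      simp only [map_sub, map_mul, sq]; rfl
    rw [hid] at h0
    exact h0

open IntermediateField in
theorem springer_extend : ∀ n : ℕ, Odd n → ∀ (K L : Type u) [Field K] [Field L] [Algebra K L],
    Module.finrank K L = n → ∀ a b : K, SpringerAniso K a b →
      SpringerAniso L (algebraMap K L a) (algebraMap K L b) := by
  intro n
  induction n using Nat.strong_induction_on with
  | _ n IH =>
  intro hodd K L _ _ _ hrank a b hab x y z hxyz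
  have hfin : FiniteDimensional K L := FiniteDimensional.of_finrank_pos (hrank ▸ hodd.pos)
  by_cases H : ∃ w : L, (w = x ∨ w = y ∨ w = z) ∧ w ∉ Set.range (algebraMap K L)
  · obtain ⟨w, hwor, hw⟩ := H
    have hint : IsIntegral K w := IsIntegral.of_finite K w
    set m := minpoly K w with hmdef
    have hirr : Irreducible m := minpoly.irreducible hint
    have hmo : m.Monic := minpoly.monic hint
    have hK'rank : Module.finrank K K⟮w⟯ = m.natDegree := IntermediateField.adjoin.finrank hint
    have hmul : Module.finrank K K⟮w⟯ * Module.finrank K⟮w⟯ L = n := by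
      rw [Module.finrank_mul_finrank, hrank]
    have hoddprod := Nat.odd_mul.mp (hmul ▸ hodd)
    have hK'ne : Module.finrank K K⟮w⟯ ≠ 1 := by
      intro h1
      have hbot : K⟮w⟯ = ⊥ := IntermediateField.finrank_eq_one_iff.mp h1
      have hwK : w ∈ K⟮w⟯ := IntermediateField.mem_adjoin_simple_self K w
      rw [hbot, IntermediateField.mem_bot] at hwK
      exact hw hwK
    have hlt : Module.finrank K⟮w⟯ L < n := by
      have hq : 0 < Module.finrank K⟮w⟯ L := hoddprod.2.pos
      have hp : 2 ≤ Module.finrank K K⟮w⟯ := by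
        have := hoddprod.1.pos; omega
      calc Module.finrank K⟮w⟯ L < 2 * Module.finrank K⟮w⟯ L := by omega
        _ ≤ Module.finrank K K⟮w⟯ * Module.finrank K⟮w⟯ L := Nat.mul_le_mul_right _ hp
        _ = n := hmul
    have h1 : SpringerAniso (AdjoinRoot m) (AdjoinRoot.of m a) (AdjoinRoot.of m b) :=
      springer_adjoinRoot a b hab m.natDegree m hirr hmo rfl (hK'rank ▸ hoddprod.1)
    set e := IntermediateField.adjoinRootEquivAdjoin K hint with hedef
    have h2 : SpringerAniso K⟮w⟯ (algebraMap K K⟮w⟯ a) (algebraMap K K⟮w⟯ b) := by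
      have h2' := springerAniso_congr e.toRingEquiv h1
      have ea : e.toRingEquiv (AdjoinRoot.of m a) = algebraMap K K⟮w⟯ a := by
        show e (AdjoinRoot.of m a) = _
        rw [← AdjoinRoot.algebraMap_eq]
        exact e.commutes a
      have eb : e.toRingEquiv (AdjoinRoot.of m b) = algebraMap K K⟮w⟯ b := by
        show e (AdjoinRoot.of m b) = _
        rw [← AdjoinRoot.algebraMap_eq]
        exact e.commutes b
      rwa [ea, eb] at h2'
    have h3 := IH (Module.finrank K⟮w⟯ L) hlt hoddprod.2 K⟮w⟯ L rfl
      (algebraMap K K⟮w⟯ a) (algebraMap K K⟮w⟯ b) h2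
    rw [← IsScalarTower.algebraMap_apply, ← IsScalarTower.algebraMap_apply] at h3
    exact h3 x y z hxyz
  · push_neg at H
    obtain ⟨x₀, hx₀⟩ := H x (Or.inl rfl)
    obtain ⟨y₀, hy₀⟩ := H y (Or.inr (Or.inl rfl))
    obtain ⟨z₀, hz₀⟩ := H z (Or.inr (Or.inr rfl))
    have h0 : algebraMap K L (x₀ ^ 2 - a * y₀ ^ 2 - b * z₀ ^ 2) = algebraMap K L 0 := by
      rw [map_zero, map_sub, map_sub, map_mul, map_mul, map_pow, map_pow, map_pow, hx₀, hy₀, hz₀]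
      exact hxyz
    obtain ⟨r1, r2, r3⟩ := hab x₀ y₀ z₀ ((algebraMap K L).injective h0)
    refine ⟨?_, ?_, ?_⟩ <;> [rw [← hx₀, r1]; rw [← hy₀, r2]; rw [← hz₀, r3]] <;> exact map_zero _

theorem springer_norm_aniso {L : Type*} [Field L] {a b : L} (h : SpringerAniso L a b) :
    ∀ x y z w : L, x ^ 2 - a * y ^ 2 - b * z ^ 2 + a * b * w ^ 2 = 0 →
      x = 0 ∧ y = 0 ∧ z = 0 ∧ w = 0 := by
  intro x y z w hE
  rcases eq_or_ne (z ^ 2 - a * w ^ 2) 0 with hs | hs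
  · obtain ⟨hz, hw, -⟩ := h z w 0 (by linear_combination hs)
    subst hz; subst hw
    obtain ⟨hx, hy, -⟩ := h x y 0 (by linear_combination hE)
    exact ⟨hx, hy, rfl, rfl⟩
  · exfalso
    have key : (x * z + a * y * w) ^ 2 - a * (x * w + y * z) ^ 2
        - b * (z ^ 2 - a * w ^ 2) ^ 2 = 0 := by
      linear_combination (z ^ 2 - a * w ^ 2) * hE
    exact hs (h _ _ _ key).2.2

theorem springer_mul_star {R : Type*} [CommRing R] {c₁ c₂ : R} (q : ℍ[R,c₁,c₂]) :
    q * star q = ((q.re ^ 2 - c₁ * q.imI ^ 2 - c₂ * q.imJ ^ 2 + c₁ * c₂ * q.imK ^ 2 : R) :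
      ℍ[R,c₁,c₂]) := by
  ext <;>
    simp only [QuaternionAlgebra.re_mul, QuaternionAlgebra.imI_mul, QuaternionAlgebra.imJ_mul,
      QuaternionAlgebra.imK_mul, QuaternionAlgebra.re_star, QuaternionAlgebra.imI_star,
      QuaternionAlgebra.imJ_star, QuaternionAlgebra.imK_star, QuaternionAlgebra.re_coe,
      QuaternionAlgebra.imI_coe, QuaternionAlgebra.imJ_coe, QuaternionAlgebra.imK_coe] <;>
    ring

theorem springer_star_mul {R : Type*} [CommRing R] {c₁ c₂ : R} (q : ℍ[R,c₁,c₂]) :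
    star q * q = ((q.re ^ 2 - c₁ * q.imI ^ 2 - c₂ * q.imJ ^ 2 + c₁ * c₂ * q.imK ^ 2 : R) :
      ℍ[R,c₁,c₂]) := by
  ext <;>
    simp only [QuaternionAlgebra.re_mul, QuaternionAlgebra.imI_mul, QuaternionAlgebra.imJ_mul,
      QuaternionAlgebra.imK_mul, QuaternionAlgebra.re_star, QuaternionAlgebra.imI_star,
      QuaternionAlgebra.imJ_star, QuaternionAlgebra.imK_star, QuaternionAlgebra.re_coe,
      QuaternionAlgebra.imI_coe, QuaternionAlgebra.imJ_coe, QuaternionAlgebra.imK_coe] <;>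
    ring

theorem springer_division {L : Type*} [Field L] {a b : L} (h : SpringerAniso L a b) :
    ∀ q : ℍ[L, a, b], q ≠ 0 → IsUnit q := by
  intro q hq
  set N : L := q.re ^ 2 - a * q.imI ^ 2 - b * q.imJ ^ 2 + a * b * q.imK ^ 2 with hNdef
  have hN : N ≠ 0 := by
    intro h0
    obtain ⟨h1, h2, h3, h4⟩ := springer_norm_aniso h q.re q.imI q.imJ q.imK (hNdef ▸ h0)
    exact hq (QuaternionAlgebra.ext h1 h2 h3 h4)
  refine isUnit_iff_exists.mpr ⟨star q * ((N⁻¹ : L) : ℍ[L, a, b]), ?_, ?_⟩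
  · rw [← mul_assoc, springer_mul_star q, ← hNdef, ← QuaternionAlgebra.coe_mul,
      mul_inv_cancel₀ hN, QuaternionAlgebra.coe_one]
  · rw [mul_assoc, QuaternionAlgebra.coe_commutes, ← mul_assoc, springer_star_mul q, ← hNdef,
      ← QuaternionAlgebra.coe_mul, mul_comm N N⁻¹, inv_mul_cancel₀ hN, QuaternionAlgebra.coe_one]


/-- Springer's theorem for quaternion algebras: if `F ⊆ F'` is a field
extension of odd degree and `Q = (a,b)_F` is a quaternion division algebra
over `F` (char `F ≠ 2`), then `Q ⊗_F F' = (a,b)_{F'}` is still a division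
algebra.  In particular a smooth conic over `F` without `F`-points has no
points over any odd-degree extension: the conic `x² - a·y² - b·z² = 0` has no
nonzero `F'`-solution. -/
theorem stmt_16 (F F' : Type*) [Field F] [Field F'] [Algebra F F']
    (hodd : Odd (Module.finrank F F')) (hchar : (2 : F) ≠ 0)
    (a b : F) (ha : a ≠ 0) (hb : b ≠ 0)
    (hdiv : ∀ q : ℍ[F, a, b], q ≠ 0 → IsUnit q) :
    (∀ q : ℍ[F', algebraMap F F' a, algebraMap F F' b], q ≠ 0 → IsUnit q) ∧
    (∀ x y z : F', x ^ 2 - algebraMap F F' a * y ^ 2 - algebraMap F F' b * z ^ 2 = 0 →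
      x = 0 ∧ y = 0 ∧ z = 0) := by
  have hconicF : SpringerAniso F a b := by
    intro x y z hxyz
    set q : ℍ[F, a, b] := ⟨x, y, z, 0⟩ with hqdef
    have hq0 : q = 0 := by
      rcases eq_or_ne q 0 with h0 | h0
      · exact h0
      · exfalso
        have hu := hdiv q h0
        have hN : q * star q = 0 := by
          rw [springer_mul_star q]
          have hz : q.re ^ 2 - a * q.imI ^ 2 - b * q.imJ ^ 2 + a * b * q.imK ^ 2 = 0 := by
            show x ^ 2 - a * y ^ 2 - b * z ^ 2 + a * b * 0 ^ 2 = 0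
            linear_combination hxyz
          rw [hz, QuaternionAlgebra.coe_zero]
        have hstar : star q = 0 := hu.mul_left_cancel (by rw [hN, mul_zero])
        exact h0 (by rw [← star_star q, hstar, star_zero])
    rw [hqdef] at hq0
    rw [QuaternionAlgebra.ext_iff] at hq0
    exact ⟨hq0.1, hq0.2.1, hq0.2.2.1⟩
  haveI hfd : FiniteDimensional F F' := FiniteDimensional.of_finrank_pos hodd.pos
  have hBa := springerAniso_congr (IntermediateField.botEquiv F F').symm.toRingEquiv hconicF
  rw [show (IntermediateField.botEquiv F F').symm.toRingEquiv a
        = algebraMap F (⊥ : IntermediateField F F') a from IntermediateField.botEquiv_symm a,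
      show (IntermediateField.botEquiv F F').symm.toRingEquiv b
        = algebraMap F (⊥ : IntermediateField F F') b from IntermediateField.botEquiv_symm b]
    at hBa
  have hOdd' : Odd (Module.finrank ↥(⊥ : IntermediateField F F') F') := by
    rwa [IntermediateField.finrank_bot']
  have hF' := springer_extend _ hOdd' ↥(⊥ : IntermediateField F F') F' rfl _ _ hBa
  rw [← IsScalarTower.algebraMap_apply, ← IsScalarTower.algebraMap_apply] at hF'
  exact ⟨springer_division hF', hF'⟩
end
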